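/- On M = ℝ², Weinstein's three-point function S_can is admissible: for all x, y, z ∈ M, S_can(x, s_x(y), z) = −S_can(x, y, z), where s_x is the symmetry at x. (Admissibility of S_can, asserted in Remark 8.7 and Section 8.3, is one of the compatibility conditions defining the phase of the WKB quantisation kernel.) -/
import Mathlib


/-- The symmetry `s_{(a,ℓ)}(a',ℓ') = (2a - a', 2cosh(a - a')ℓ - ℓ')`. -/
noncomputable def symmPoincare (x y : ℝ × ℝ) : ℝ × ℝ :=
  (2 * x.1 - y.1, 2 * Real.cosh (x.1 - y.1) * x.2 - y.2)

/-- Weinstein's three-point function. -/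
noncomputable def Scan (x y z : ℝ × ℝ) : ℝ :=
  Real.sinh (x.1 - y.1) * z.2 + Real.sinh (y.1 - z.1) * x.2
    + Real.sinh (z.1 - x.1) * y.2

/-- `S_can` is admissible: `S_can(x, s_x(y), z) = -S_can(x, y, z)`. -/
theorem Scan_admissible :
    ∀ x y z : ℝ × ℝ, Scan x (symmPoincare x y) z = - Scan x y z := by
  rintro ⟨a, l⟩ ⟨b, m⟩ ⟨c, n⟩
  simp only [Scan, symmPoincare]
  simp only [Real.sinh_eq, Real.cosh_eq, Real.exp_sub, Real.exp_add, Real.exp_neg, two_mul]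
  have h : ∀ t : ℝ, Real.exp t ≠ 0 := fun t => (Real.exp_pos t).ne'
  field_simp
  ring
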